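/- Under gradient flow on φ(W₁,…,Wₙ) = ℓ(Wₙ⋯W₁) with square d×d weight matrices whose unbalancedness magnitude is zero at initialization, the product matrix W(t) := Wₙ(t)⋯W₁(t) satisfies the end-to-end dynamics Ẇ(t) = −∑_{j=1}^{n} [W(t)W(t)ᵀ]^{(j−1)/n} ∇ℓ(W(t)) [W(t)ᵀW(t)]^{(n−j)/n}. -/

import Mathlib

open Matrix

/-- Product `W (m-1) * ⋯ * W j` of a chain of matrices with dimensions given by `d`
(the identity when `m = j`, junk when `m < j`). -/
noncomputable def chain (d : ℕ → ℕ) (W : ∀ k : ℕ, Matrix (Fin (d (k + 1))) (Fin (d k)) ℝ)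
    (j : ℕ) : (m : ℕ) → Matrix (Fin (d m)) (Fin (d j)) ℝ
  | 0 => if h : j = 0 then by subst h; exact 1 else 0
  | m + 1 => if h : j = m + 1 then by subst h; exact 1 else W m * chain d W j m

/-- The spectral real power `A ^ β` of a (positive semidefinite) symmetric real matrix, defined
via the spectral decomposition (with `0 ^ 0 = 1`, so `A ^ 0 = I`); junk value `0` if `A` is not
symmetric. -/
noncomputable def psdPow {m : ℕ} (A : Matrix (Fin m) (Fin m) ℝ) (β : ℝ) :
    Matrix (Fin m) (Fin m) ℝ :=
  if hA : A.IsHermitian then hA.cfc (fun x => x ^ β) else 0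

section Aux

variable {d : ℕ}

private lemma chain_self (V : ∀ _ : ℕ, Matrix (Fin d) (Fin d) ℝ) (j : ℕ) :
    chain (fun _ => d) V j j = 1 := by
  cases j with
  | zero => rw [chain, dif_pos rfl]
  | succ m => rw [chain, dif_pos rfl]

private lemma chain_succ (V : ∀ _ : ℕ, Matrix (Fin d) (Fin d) ℝ) {j m : ℕ} (hj : j ≠ m + 1) :
    chain (fun _ => d) V j (m + 1) = V m * chain (fun _ => d) V j m := by
  rw [chain, dif_neg hj]

private lemma chain_bot (V : ∀ _ : ℕ, Matrix (Fin d) (Fin d) ℝ) {j m : ℕ} (hj : j < m) :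
    chain (fun _ => d) V j m = chain (fun _ => d) V (j + 1) m * V j := by
  induction m with
  | zero => omega
  | succ m ih =>
    rcases Nat.lt_or_ge j m with h | h
    · rw [chain_succ V (by omega), chain_succ V (by omega), ih h, Matrix.mul_assoc]
    · have : j = m := by omega
      subst this
      rw [chain_succ V (by omega), chain_self, chain_self, Matrix.one_mul, Matrix.mul_one]

private lemma hasDerivAt_mul_entry {A B : ℝ → Matrix (Fin d) (Fin d) ℝ}
    {A' B' : Matrix (Fin d) (Fin d) ℝ} {t : ℝ}
    (hA : ∀ i i', HasDerivAt (fun s => A s i i') (A' i i') t)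
    (hB : ∀ i i', HasDerivAt (fun s => B s i i') (B' i i') t)
    (i i' : Fin d) :
    HasDerivAt (fun s => (A s * B s) i i') ((A' * B t + A t * B') i i') t := by
  simp only [Matrix.mul_apply, Matrix.add_apply]
  rw [← Finset.sum_add_distrib]
  exact HasDerivAt.fun_sum fun k _ => (hA i k).mul (hB k i')

private lemma chain_hasDerivAt {n : ℕ} (W W' : ℕ → ℝ → Matrix (Fin d) (Fin d) ℝ)
    (hderiv : ∀ k < n, ∀ (t : ℝ) (i i' : Fin d),
      HasDerivAt (fun s => W k s i i') (W' k t i i') t)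
    (m : ℕ) (hm : m ≤ n) (t : ℝ) (i i' : Fin d) :
    HasDerivAt (fun s => chain (fun _ => d) (fun k' => W k' s) 0 m i i')
      ((∑ j ∈ Finset.range m, chain (fun _ => d) (fun k' => W k' t) (j + 1) m *
        W' j t * chain (fun _ => d) (fun k' => W k' t) 0 j) i i') t := by
  induction m generalizing i i' with
  | zero =>
    simp only [Finset.range_zero, Finset.sum_empty, Matrix.zero_apply]
    have : ∀ s : ℝ, chain (fun _ => d) (fun k' => W k' s) 0 0 i i' =
        (1 : Matrix (Fin d) (Fin d) ℝ) i i' := fun s => by rw [chain_self]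
    simp only [this]
    exact hasDerivAt_const t _
  | succ m ih =>
    have hm' : m ≤ n := by omega
    have key : ∀ s : ℝ, chain (fun _ => d) (fun k' => W k' s) 0 (m + 1) i i' =
        (W m s * chain (fun _ => d) (fun k' => W k' s) 0 m) i i' := fun s => by
      rw [chain_succ _ (by omega)]
    simp only [key]
    have hd := hasDerivAt_mul_entry (A := fun s => W m s)
      (B := fun s => chain (fun _ => d) (fun k' => W k' s) 0 m)
      (A' := W' m t)
      (B' := ∑ j ∈ Finset.range m, chain (fun _ => d) (fun k' => W k' t) (j + 1) m *
        W' j t * chain (fun _ => d) (fun k' => W k' t) 0 j)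
      (hderiv m (by omega) t) (fun a b => ih hm' a b) i i'
    convert hd using 2
    rw [Finset.sum_range_succ, chain_self, Matrix.one_mul, Finset.mul_sum, add_comm]
    refine congrFun (congrFun (congrArg (W' m t * chain (fun _ => d) (fun k' => W k' t) 0 m + ·) ?_) i) i'
    apply Finset.sum_congr rfl
    intro j hj
    rw [chain_succ _ (by simp at hj; omega)]
    simp [Matrix.mul_assoc]

private lemma psdPow_pow {m : ℕ} {M : Matrix (Fin m) (Fin m) ℝ} (hM : M.PosSemidef)
    {n : ℕ} (hn : 0 < n) (k : ℕ) :
    psdPow (M ^ n) ((k : ℝ) / n) = M ^ k := by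
  have h1 : (M ^ n).IsHermitian := (hM.pow n).1
  rw [psdPow, dif_pos h1, ← Matrix.IsHermitian.cfc_eq]
  have hβ : (0:ℝ) ≤ (k : ℝ) / n := by positivity
  have hcont : ContinuousOn (fun x : ℝ => x ^ ((k : ℝ) / n)) ((· ^ n) '' spectrum ℝ M) :=
    (Real.continuous_rpow_const hβ).continuousOn
  have hcomp := cfc_comp_pow (fun x : ℝ => x ^ ((k : ℝ) / n)) n M hcont hM.1
  rw [← hcomp]
  have hc : cfc (fun x : ℝ => (x ^ n : ℝ) ^ ((k:ℝ)/n)) M = cfc (fun x : ℝ => x ^ k) M := by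
    apply cfc_congr
    intro x hx
    have hx0 : 0 ≤ x := by
      rw [hM.isHermitian.spectrum_real_eq_range_eigenvalues] at hx
      obtain ⟨i, rfl⟩ := hx
      exact hM.eigenvalues_nonneg i
    show ((x : ℝ) ^ n) ^ ((k:ℝ)/n) = x ^ k
    rw [← Real.rpow_natCast x n, ← Real.rpow_mul hx0,
      show (n : ℝ) * ((k:ℝ)/n) = (k : ℝ) by field_simp, Real.rpow_natCast x k]
  rw [hc]
  exact cfc_pow_id M k hM.1

private lemma chain_inter (n : ℕ) (V : ℕ → Matrix (Fin d) (Fin d) ℝ)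
    (hbal : ∀ j, j + 1 < n → (V (j + 1))ᵀ * V (j + 1) = V j * (V j)ᵀ) :
    ∀ i, i + 1 ≤ n → chain (fun _ => d) V 0 (i + 1) * ((V 0)ᵀ * V 0)
      = V i * (V i)ᵀ * chain (fun _ => d) V 0 (i + 1) := by
  intro i
  induction i with
  | zero =>
    intro _
    rw [chain_succ V (by omega), chain_self]
    simp [Matrix.mul_assoc]
  | succ i ih =>
    intro h
    rw [chain_succ V (show (0:ℕ) ≠ i + 1 + 1 by omega)]
    rw [Matrix.mul_assoc, ih (by omega), ← hbal i (by omega)]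
    simp [Matrix.mul_assoc]

private lemma chain_powA (n : ℕ) (V : ℕ → Matrix (Fin d) (Fin d) ℝ)
    (hbal : ∀ j, j + 1 < n → (V (j + 1))ᵀ * V (j + 1) = V j * (V j)ᵀ) :
    ∀ j ≤ n, (chain (fun _ => d) V 0 j)ᵀ * chain (fun _ => d) V 0 j = ((V 0)ᵀ * V 0) ^ j := by
  intro j
  induction j with
  | zero =>
    intro _
    rw [chain_self]
    simp
  | succ j ih =>
    intro h
    rw [chain_succ V (show (0:ℕ) ≠ j + 1 by omega), Matrix.transpose_mul]
    cases j with
    | zero =>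
      rw [chain_self]
      simp
    | succ i =>
      have hb : (V (i + 1))ᵀ * V (i + 1) = V i * (V i)ᵀ := hbal i (by omega)
      calc (chain (fun _ => d) V 0 (i + 1))ᵀ * (V (i + 1))ᵀ *
            (V (i + 1) * chain (fun _ => d) V 0 (i + 1))
          = (chain (fun _ => d) V 0 (i + 1))ᵀ *
              (((V (i + 1))ᵀ * V (i + 1)) * chain (fun _ => d) V 0 (i + 1)) := by
            simp [Matrix.mul_assoc]
        _ = (chain (fun _ => d) V 0 (i + 1))ᵀ *
              (V i * (V i)ᵀ * chain (fun _ => d) V 0 (i + 1)) := by rw [hb]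
        _ = (chain (fun _ => d) V 0 (i + 1))ᵀ *
              (chain (fun _ => d) V 0 (i + 1) * ((V 0)ᵀ * V 0)) := by
            rw [← chain_inter n V hbal i (by omega)]
        _ = ((chain (fun _ => d) V 0 (i + 1))ᵀ * chain (fun _ => d) V 0 (i + 1)) *
              ((V 0)ᵀ * V 0) := by simp [Matrix.mul_assoc]
        _ = ((V 0)ᵀ * V 0) ^ (i + 1) * ((V 0)ᵀ * V 0) := by rw [ih (by omega)]
        _ = ((V 0)ᵀ * V 0) ^ (i + 1 + 1) := by rw [← pow_succ]

private lemma chain_rev (n : ℕ) (V : ℕ → Matrix (Fin d) (Fin d) ℝ) :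
    ∀ m ≤ n, chain (fun _ => d) (fun i => (V (n - 1 - i))ᵀ) 0 m
      = (chain (fun _ => d) V (n - m) n)ᵀ := by
  intro m
  induction m with
  | zero =>
    intro _
    rw [Nat.sub_zero, chain_self, chain_self, Matrix.transpose_one]
  | succ m ih =>
    intro h
    rw [chain_succ _ (show (0:ℕ) ≠ m + 1 by omega), ih (by omega)]
    have e1 : n - (m + 1) = n - 1 - m := by omega
    have e2 : n - 1 - m + 1 = n - m := by omega
    rw [e1, chain_bot V (show n - 1 - m < n from by omega), e2, Matrix.transpose_mul]

private lemma chain_powB (n : ℕ) (V : ℕ → Matrix (Fin d) (Fin d) ℝ)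
    (hbal : ∀ j, j + 1 < n → (V (j + 1))ᵀ * V (j + 1) = V j * (V j)ᵀ) :
    ∀ k ≤ n, chain (fun _ => d) V (n - k) n * (chain (fun _ => d) V (n - k) n)ᵀ
      = (V (n - 1) * (V (n - 1))ᵀ) ^ k := by
  intro k hk
  have hbalU : ∀ j, j + 1 < n →
      ((fun i => (V (n - 1 - i))ᵀ) (j + 1))ᵀ * (fun i => (V (n - 1 - i))ᵀ) (j + 1)
        = (fun i => (V (n - 1 - i))ᵀ) j * ((fun i => (V (n - 1 - i))ᵀ) j)ᵀ := by
    intro j hj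
    simp only [Matrix.transpose_transpose]
    have hb := hbal (n - 2 - j) (by omega)
    rw [show n - 2 - j + 1 = n - 1 - j from by omega] at hb
    rw [show n - 1 - (j + 1) = n - 2 - j from by omega]
    exact hb.symm
  have hpa := chain_powA n (fun i => (V (n - 1 - i))ᵀ) hbalU k hk
  rw [chain_rev n V k hk] at hpa
  simpa [Matrix.transpose_transpose, Matrix.transpose_mul] using hpa

private lemma balance_conserved {n : ℕ}
    (gradℓ : Matrix (Fin d) (Fin d) ℝ → Matrix (Fin d) (Fin d) ℝ)
    (W W' : ℕ → ℝ → Matrix (Fin d) (Fin d) ℝ)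
    (hderiv : ∀ k < n, ∀ (t : ℝ) (i i' : Fin d),
      HasDerivAt (fun s => W k s i i') (W' k t i i') t)
    (hflow : ∀ k < n, ∀ t : ℝ,
      W' k t = -((chain (fun _ => d) (fun k' => W k' t) (k + 1) n)ᵀ *
        gradℓ (chain (fun _ => d) (fun k' => W k' t) 0 n) *
        (chain (fun _ => d) (fun k' => W k' t) 0 k)ᵀ))
    (hbal0 : ∀ j : ℕ, j + 1 < n → (W (j + 1) 0)ᵀ * W (j + 1) 0 = W j 0 * (W j 0)ᵀ)
    (j : ℕ) (hj : j + 1 < n) (t : ℝ) :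
    (W (j + 1) t)ᵀ * W (j + 1) t = W j t * (W j t)ᵀ := by
  have key : ∀ s : ℝ,
      (W' (j + 1) s)ᵀ * W (j + 1) s + (W (j + 1) s)ᵀ * W' (j + 1) s
        = W' j s * (W j s)ᵀ + W j s * (W' j s)ᵀ := by
    intro s
    rw [hflow (j + 1) hj s, hflow j (by omega) s,
      chain_bot (fun k' => W k' s) (show j + 1 < n from hj),
      chain_succ (fun k' => W k' s) (show (0:ℕ) ≠ j + 1 from by omega)]
    simp only [Matrix.transpose_neg, Matrix.transpose_mul, Matrix.transpose_transpose,
      Matrix.neg_mul, Matrix.mul_neg, Matrix.mul_assoc]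
    abel
  have hder : ∀ (i i' : Fin d) (s : ℝ),
      HasDerivAt (fun u => ((W (j + 1) u)ᵀ * W (j + 1) u - W j u * (W j u)ᵀ) i i') 0 s := by
    intro i i' s
    have h1 := hasDerivAt_mul_entry (A := fun u => (W (j + 1) u)ᵀ) (B := fun u => W (j + 1) u)
      (A' := (W' (j + 1) s)ᵀ) (B' := W' (j + 1) s) (t := s)
      (fun a b => hderiv (j + 1) hj s b a) (fun a b => hderiv (j + 1) hj s a b) i i'
    have h2 := hasDerivAt_mul_entry (A := fun u => W j u) (B := fun u => (W j u)ᵀ)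
      (A' := W' j s) (B' := (W' j s)ᵀ) (t := s)
      (fun a b => hderiv j (by omega) s a b) (fun a b => hderiv j (by omega) s b a) i i'
    have h3 := h1.sub h2
    have h4 : (((W' (j + 1) s)ᵀ * W (j + 1) s + (W (j + 1) s)ᵀ * W' (j + 1) s) i i')
        - ((W' j s * (W j s)ᵀ + W j s * (W' j s)ᵀ) i i') = 0 := by rw [key s]; ring
    rw [h4] at h3
    exact h3
  have hconst : ∀ i i' : Fin d,
      ((W (j + 1) t)ᵀ * W (j + 1) t - W j t * (W j t)ᵀ) i i'
        = ((W (j + 1) 0)ᵀ * W (j + 1) 0 - W j 0 * (W j 0)ᵀ) i i' := fun i i' =>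
    is_const_of_deriv_eq_zero (fun s => (hder i i' s).differentiableAt)
      (fun s => (hder i i' s).deriv) t 0
  have h0 : (W (j + 1) 0)ᵀ * W (j + 1) 0 - W j 0 * (W j 0)ᵀ = 0 := by
    rw [hbal0 j hj]; simp
  ext i i'
  have hc := hconst i i'
  rw [h0] at hc
  simpa [Matrix.sub_apply, sub_eq_zero] using hc

end Aux

/-- End-to-end dynamics: under gradient flow on `φ(W₁,…,Wₙ) = ℓ(Wₙ⋯W₁)` with square `d×d`
weight matrices (0-indexed layers `k = 0,…,n−1`) whose unbalancedness magnitude is zero at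
initialization, the product `P(t) := Wₙ(t)⋯W₁(t)` satisfies
`Ṗ(t) = −∑_{j=1}^{n} [P(t)P(t)ᵀ]^{(j−1)/n} ∇ℓ(P(t)) [P(t)ᵀP(t)]^{(n−j)/n}`. -/
theorem end_to_end_dynamics {d n : ℕ}
    (gradℓ : Matrix (Fin d) (Fin d) ℝ → Matrix (Fin d) (Fin d) ℝ)
    (W W' : ℕ → ℝ → Matrix (Fin d) (Fin d) ℝ)
    (hderiv : ∀ k < n, ∀ (t : ℝ) (i i' : Fin d),
      HasDerivAt (fun s => W k s i i') (W' k t i i') t)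
    (hflow : ∀ k < n, ∀ t : ℝ,
      W' k t = -((chain (fun _ => d) (fun k' => W k' t) (k + 1) n)ᵀ *
        gradℓ (chain (fun _ => d) (fun k' => W k' t) 0 n) *
        (chain (fun _ => d) (fun k' => W k' t) 0 k)ᵀ))
    (hbal0 : ∀ j : ℕ, j + 1 < n → (W (j + 1) 0)ᵀ * W (j + 1) 0 = W j 0 * (W j 0)ᵀ) :
    ∀ (t : ℝ), 0 ≤ t → ∀ (i i' : Fin d),
      HasDerivAt (fun s => chain (fun _ => d) (fun k' => W k' s) 0 n i i')
        ((-(∑ j ∈ Finset.range n,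
            psdPow (chain (fun _ => d) (fun k' => W k' t) 0 n *
                (chain (fun _ => d) (fun k' => W k' t) 0 n)ᵀ) ((j : ℝ) / n) *
              gradℓ (chain (fun _ => d) (fun k' => W k' t) 0 n) *
              psdPow ((chain (fun _ => d) (fun k' => W k' t) 0 n)ᵀ *
                chain (fun _ => d) (fun k' => W k' t) 0 n) (((n : ℝ) - (j + 1)) / n)))
          i i') t := by
  intro t _ht i i'
  by_cases hn : n = 0
  · subst hn
    simp only [Finset.range_zero, Finset.sum_empty, neg_zero, Matrix.zero_apply]
    have h1 : ∀ s : ℝ, chain (fun _ => d) (fun k' => W k' s) 0 0 i i' =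
        (1 : Matrix (Fin d) (Fin d) ℝ) i i' := fun s => by rw [chain_self]
    simp only [h1]
    exact hasDerivAt_const t _
  · have hn' : 0 < n := Nat.pos_of_ne_zero hn
    have hD := chain_hasDerivAt W W' hderiv n le_rfl t i i'
    set V : ℕ → Matrix (Fin d) (Fin d) ℝ := fun k' => W k' t with hV
    have hbal : ∀ j, j + 1 < n → (V (j + 1))ᵀ * V (j + 1) = V j * (V j)ᵀ := fun j hj =>
      balance_conserved gradℓ W W' hderiv hflow hbal0 j hj t
    set C : ℕ → ℕ → Matrix (Fin d) (Fin d) ℝ := fun j m => chain (fun _ => d) V j m with hC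
    set M : Matrix (Fin d) (Fin d) ℝ := (V 0)ᵀ * V 0 with hM
    set N : Matrix (Fin d) (Fin d) ℝ := V (n - 1) * (V (n - 1))ᵀ with hN
    have hMpsd : M.PosSemidef := by
      rw [hM, ← Matrix.conjTranspose_eq_transpose_of_trivial]
      exact Matrix.posSemidef_conjTranspose_mul_self _
    have hNpsd : N.PosSemidef := by
      rw [hN, ← Matrix.conjTranspose_eq_transpose_of_trivial]
      exact Matrix.posSemidef_self_mul_conjTranspose _
    have hA : ∀ j ≤ n, (C 0 j)ᵀ * C 0 j = M ^ j := chain_powA n V hbal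
    have hB : ∀ k ≤ n, C (n - k) n * (C (n - k) n)ᵀ = N ^ k := chain_powB n V hbal
    have hPtP : (C 0 n)ᵀ * C 0 n = M ^ n := hA n le_rfl
    have hPPt : C 0 n * (C 0 n)ᵀ = N ^ n := by
      have := hB n le_rfl
      rwa [Nat.sub_self] at this
    have g := gradℓ (C 0 n)
    have hEq : (∑ j ∈ Finset.range n, C (j + 1) n * W' j t * C 0 j)
        = -(∑ j ∈ Finset.range n,
            psdPow (C 0 n * (C 0 n)ᵀ) ((j : ℝ) / n) * gradℓ (C 0 n) *
              psdPow ((C 0 n)ᵀ * C 0 n) (((n : ℝ) - (j + 1)) / n)) := by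
      have hterm : ∀ j ∈ Finset.range n, C (j + 1) n * W' j t * C 0 j
          = -(N ^ (n - (j + 1)) * gradℓ (C 0 n) * M ^ j) := by
        intro j hj
        rw [Finset.mem_range] at hj
        rw [hflow j hj t]
        have hBj : C (j + 1) n * (C (j + 1) n)ᵀ = N ^ (n - (j + 1)) := by
          have := hB (n - (j + 1)) (by omega)
          rwa [show n - (n - (j + 1)) = j + 1 from by omega] at this
        rw [← hBj, ← hA j (by omega)]
        simp [Matrix.mul_assoc]
        rfl
      rw [Finset.sum_congr rfl hterm]
      rw [← Finset.sum_range_reflect (fun j => -(N ^ (n - (j + 1)) * gradℓ (C 0 n) * M ^ j)) n]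
      have hterm2 : ∀ j ∈ Finset.range n,
          -(N ^ (n - (n - 1 - j + 1)) * gradℓ (C 0 n) * M ^ (n - 1 - j))
            = -(psdPow (C 0 n * (C 0 n)ᵀ) ((j : ℝ) / n) * gradℓ (C 0 n) *
                psdPow ((C 0 n)ᵀ * C 0 n) (((n : ℝ) - (j + 1)) / n)) := by
        intro j hj
        rw [Finset.mem_range] at hj
        rw [hPPt, hPtP, show ((n : ℝ) - ((j : ℝ) + 1)) = ((n - (j + 1) : ℕ) : ℝ) from by
          push_cast [Nat.cast_sub (by omega : j + 1 ≤ n)]; ring]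
        rw [psdPow_pow hNpsd hn' j, psdPow_pow hMpsd hn' (n - (j + 1))]
        rw [show n - (n - 1 - j + 1) = j from by omega, show n - 1 - j = n - (j + 1) from by omega]
      rw [Finset.sum_congr rfl hterm2, Finset.sum_neg_distrib]
    rw [hEq] at hD
    exact hD
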